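/- arXiv:1506.02586 — 2 statements merged into one kernel-verified Lean document; each statement's English description precedes it below -/
import Mathlib

section
/- Let p, q, p', q' be real numbers with q ≠ 0, and let ω be a nonzero infinitesimal hyperreal number. Set dp = p'·ω and dq = q'·ω. Then the hyperreal ratio ((p + dp)/(q + dq) - p/q)/ω is infinitely close to the real number (p'·q - p·q')/q^2. -/
theorem euler_quotient_rule (p q p' q' : ℝ) (hq : q ≠ 0) (ω : Hyperreal)
    (hω : ω ≠ 0) (hinf : ω.Infinitesimal) :
    Hyperreal.IsSt ((((p : Hyperreal) + p' * ω) / ((q : Hyperreal) + q' * ω) - p / q) / ω)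
      ((p' * q - p * q') / q ^ 2) := by
  have hden : Hyperreal.IsSt ((q : Hyperreal) + q' * ω) q := by
    have h1 : Hyperreal.IsSt ((q' : Hyperreal) * ω) (q' * 0) :=
      (Hyperreal.isSt_refl_real q').mul hinf
    simpa using (Hyperreal.isSt_refl_real q).add h1
  have hqh : (q : Hyperreal) ≠ 0 := by exact_mod_cast hq
  have hne : (q : Hyperreal) + q' * ω ≠ 0 := by
    intro h
    rw [h] at hden
    exact hq ((Hyperreal.isSt_refl_real 0).unique hden).symm
  have hmul : Hyperreal.IsSt ((q : Hyperreal) * ((q : Hyperreal) + q' * ω)) (q * q) :=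
    (Hyperreal.isSt_refl_real q).mul hden
  have hni : ¬ Hyperreal.Infinitesimal ((q : Hyperreal) * ((q : Hyperreal) + q' * ω)) := by
    intro h
    exact mul_ne_zero hq hq (h.unique hmul).symm
  have key : (((p : Hyperreal) + p' * ω) / ((q : Hyperreal) + q' * ω) - p / q) / ω
      = ((p' * q - p * q' : ℝ) : Hyperreal) * ((q : Hyperreal) * ((q : Hyperreal) + q' * ω))⁻¹ := by
    push_cast
    rw [div_sub_div _ _ hne hqh, div_div, eq_mul_inv_iff_mul_eq₀ (mul_ne_zero hqh hne), div_mul_eq_mul_div, div_eq_iff (mul_ne_zero (mul_ne_zero hne hqh) hω)]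
    ring
  rw [key]
  have hfinal := (Hyperreal.isSt_refl_real (p' * q - p * q')).mul (hmul.inv hni)
  have : (p' * q - p * q') / q ^ 2 = (p' * q - p * q') * (q * q)⁻¹ := by
    rw [sq]; ring
  rw [this]
  exact hfinal
end

section
/- Let f : ℝ → ℝ be twice continuously differentiable and let x be a real number. Then the second difference quotient (f(x + 2h) - 2·f(x + h) + f(x))/h^2 tends to the second derivative (deriv (deriv f)) x as h tends to 0 through nonzero values. -/
open Filter Asymptotics

private lemma peano_second_order (f : ℝ → ℝ) (hf : ContDiff ℝ 2 f) (x : ℝ) :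
    (fun u : ℝ => f (x + u) - f x - u * deriv f x - u ^ 2 / 2 * deriv (deriv f) x)
      =o[nhds 0] fun u => u ^ 2 := by
  set q := deriv (deriv f) x with hq
  have h2 : (2 : WithTop ℕ∞) = 1 + 1 := by norm_num
  have hdf : ContDiff ℝ 1 (deriv f) := by
    have := (contDiff_succ_iff_deriv.mp (h2 ▸ hf)).2.2
    exact this
  have hd1 : Differentiable ℝ f := hf.differentiable (by norm_num)
  have hd2 : Differentiable ℝ (deriv f) := hdf.differentiable one_ne_zero
  have hder2 : HasDerivAt (deriv f) q x := (hd2 x).hasDerivAt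
  set g : ℝ → ℝ := fun u => f (x + u) - f x - u * deriv f x - u ^ 2 / 2 * q with hgdef
  have hg0 : g 0 = 0 := by simp [hgdef]
  have hg' : ∀ u : ℝ, HasDerivAt g (deriv f (x + u) - deriv f x - u * q) u := by
    intro u
    have h1 : HasDerivAt (fun u : ℝ => f (x + u)) (deriv f (x + u)) u := by
      have := ((hd1 (x + u)).hasDerivAt.comp u ((hasDerivAt_id u).const_add x))
      rw [mul_one] at this
      exact this
    have h3 : HasDerivAt (fun u : ℝ => u * deriv f x) (deriv f x) u := by
      simpa using (hasDerivAt_id u).mul_const (deriv f x)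
    have h4 : HasDerivAt (fun u : ℝ => u ^ 2 / 2 * q) (u * q) u := by
      have := ((hasDerivAt_pow 2 u).div_const 2).mul_const q
      rw [show ((2:ℕ):ℝ) * u ^ (2 - 1) / 2 * q = u * q by rw [show (2:ℕ) - 1 = 1 from rfl, pow_one]; push_cast; ring] at this
      exact this
    exact ((h1.sub_const (f x)).sub h3).sub h4
  rw [isLittleO_iff]
  intro c hc
  have hlo := (hasDerivAt_iff_isLittleO.mp hder2)
  rw [isLittleO_iff] at hlo
  have hev := hlo (half_pos hc)
  rw [Metric.eventually_nhds_iff] at hev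
  obtain ⟨δ, hδ, hδb⟩ := hev
  rw [Metric.eventually_nhds_iff]
  refine ⟨δ, hδ, fun u hu => ?_⟩
  have hu' : |u| < δ := by simpa [Real.dist_eq] using hu
  have key : ‖g u - g 0‖ ≤ c / 2 * |u| * ‖u - 0‖ := by
    apply Convex.norm_image_sub_le_of_norm_hasDerivWithin_le
      (f' := fun t => deriv f (x + t) - deriv f x - t * q)
      (fun t _ => (hg' t).hasDerivWithinAt)
      (fun t ht => ?_) (convex_uIcc 0 u) (Set.left_mem_uIcc) (Set.right_mem_uIcc)
    have htu : |t| ≤ |u| := by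
      rcases Set.mem_uIcc.mp ht with h | h
      · rw [abs_of_nonneg h.1]
        exact h.2.trans (le_abs_self u)
      · rw [abs_of_nonpos h.2]
        exact (neg_le_neg h.1).trans (neg_le_abs u)
    have hdist : dist (x + t) x < δ := by
      rw [Real.dist_eq]
      simpa using lt_of_le_of_lt htu hu'
    have := hδb hdist
    simp only [add_sub_cancel_left] at this
    calc ‖deriv f (x + t) - deriv f x - t * q‖ ≤ c / 2 * ‖t‖ := by
          simpa [smul_eq_mul, mul_comm] using this
      _ ≤ c / 2 * |u| := by
          apply mul_le_mul_of_nonneg_left htu (by positivity)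
  rw [hg0, sub_zero, sub_zero] at key
  calc ‖g u‖ ≤ c / 2 * |u| * ‖u‖ := key
    _ ≤ c * ‖u ^ 2‖ := by
        rw [Real.norm_eq_abs, Real.norm_eq_abs, abs_pow]
        rw [pow_two]
        nlinarith [abs_nonneg u, mul_nonneg (abs_nonneg u) (abs_nonneg u)]

theorem second_difference_quotient_tendsto (f : ℝ → ℝ) (hf : ContDiff ℝ 2 f) (x : ℝ) :
    Filter.Tendsto (fun h : ℝ => (f (x + 2 * h) - 2 * f (x + h) + f x) / h ^ 2)
      (nhdsWithin 0 {0}ᶜ) (nhds (deriv (deriv f) x)) := by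
  set q := deriv (deriv f) x with hq
  set g : ℝ → ℝ := fun u => f (x + u) - f x - u * deriv f x - u ^ 2 / 2 * q with hgdef
  have peano : g =o[nhds 0] fun u => u ^ 2 := peano_second_order f hf x
  have h2h : (fun h : ℝ => g (2 * h)) =o[nhds 0] fun h : ℝ => h ^ 2 := by
    have hmap : Filter.Tendsto (fun h : ℝ => 2 * h) (nhds 0) (nhds 0) := by
      simpa using (tendsto_id (α := ℝ) (x := nhds 0)).const_mul 2
    have := peano.comp_tendsto hmap
    have hbig : (fun h : ℝ => (2 * h) ^ 2) =O[nhds 0] fun h : ℝ => h ^ 2 := by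
      have : (fun h : ℝ => (2 * h) ^ 2) = fun h : ℝ => 4 * h ^ 2 := by
        funext h; ring
      rw [this]
      exact (isBigO_refl (fun h : ℝ => h ^ 2) _).const_mul_left 4
    exact this.trans_isBigO hbig
  have hcomb : (fun h : ℝ => g (2 * h) - 2 * g h) =o[nhds 0] fun h : ℝ => h ^ 2 :=
    h2h.sub (peano.const_mul_left 2)
  have htend : Filter.Tendsto (fun h : ℝ => (g (2 * h) - 2 * g h) / h ^ 2)
      (nhdsWithin 0 {0}ᶜ) (nhds 0) :=
    hcomb.tendsto_div_nhds_zero.mono_left nhdsWithin_le_nhds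
  have heq : ∀ h : ℝ, h ≠ 0 →
      (f (x + 2 * h) - 2 * f (x + h) + f x) / h ^ 2 = q + (g (2 * h) - 2 * g h) / h ^ 2 := by
    intro h hh
    rw [hgdef]
    field_simp
    ring
  have : Filter.Tendsto (fun h : ℝ => q + (g (2 * h) - 2 * g h) / h ^ 2)
      (nhdsWithin 0 {0}ᶜ) (nhds (q + 0)) :=
    tendsto_const_nhds.add htend
  rw [add_zero] at this
  refine this.congr' ?_
  filter_upwards [self_mem_nhdsWithin] with h hh
  exact (heq h hh).symm
end
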